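/- For every integer z ≥ 2, the real number (⌈log₂ z⌉ : ℝ) + 2·⌈log₃(⌈log₂ z⌉)⌉ + 2 is at most log₂ z + 1.262·log₂(log₂ z) + 6.3, where log₂ and log₃ denote real logarithms in bases 2 and 3 and ⌈·⌉ is the ceiling function. -/

import Mathlib

/-- Compression scheme for transmitting an integer `z ≥ 2`:
`⌈log₂ z⌉ + 2⌈log₃(⌈log₂ z⌉)⌉ + 2 ≤ log₂ z + 1.262·log₂(log₂ z) + 6.3`. -/
theorem integer_compression_cost (z : ℤ) (hz : 2 ≤ z) :
    ((⌈Real.logb 2 (z : ℝ)⌉ : ℝ) + 2 * (⌈Real.logb 3 ((⌈Real.logb 2 (z : ℝ)⌉ : ℤ) : ℝ)⌉ : ℝ) + 2)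
      ≤ Real.logb 2 (z : ℝ) + 1.262 * Real.logb 2 (Real.logb 2 (z : ℝ)) + 6.3 := by
  have hz2 : (2:ℝ) ≤ (z:ℝ) := by exact_mod_cast hz
  set L := Real.logb 2 (z:ℝ) with hLdef
  have hlog2 : 0 < Real.log 2 := Real.log_pos (by norm_num)
  have hlog3 : 0 < Real.log 3 := Real.log_pos (by norm_num)
  have hL1 : 1 ≤ L := by
    have h2 : Real.logb 2 2 = 1 := Real.logb_self_eq_one (by norm_num)
    have := Real.logb_le_logb_of_le (by norm_num : (1:ℝ)<2) (by norm_num) hz2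
    rw [h2] at this
    exact this
  -- key numeric fact: 2 log 2 ≤ 1.262 log 3
  have key : 2 * Real.log 2 ≤ 1.262 * Real.log 3 := by
    have hpow : (2:ℝ)^(2000:ℕ) ≤ (3:ℝ)^(1262:ℕ) := by set_option maxRecDepth 100000 in exact_mod_cast (show (2:ℕ)^2000 ≤ 3^1262 by decide)
    have h := Real.log_le_log (by positivity) hpow
    rw [Real.log_pow, Real.log_pow] at h
    push_cast at h
    linarith
  have hceilL : ((⌈L⌉:ℤ):ℝ) ≤ L + 1 := (Int.ceil_lt_add_one L).le
  have hceil1 : (1:ℤ) ≤ ⌈L⌉ := Int.ceil_pos.mpr (by linarith)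
  have hcR : (1:ℝ) ≤ ((⌈L⌉:ℤ):ℝ) := by exact_mod_cast hceil1
  have h3c : Real.logb 3 ((⌈L⌉:ℤ):ℝ) ≤ Real.logb 3 (2*L) :=
    Real.logb_le_logb_of_le (by norm_num : (1:ℝ)<3) (by linarith) (by linarith)
  have hsplit : Real.logb 3 (2*L) = Real.logb 3 2 + Real.logb 3 L :=
    Real.logb_mul (by norm_num) (by positivity)
  have hlogL : 0 ≤ Real.log L := Real.log_nonneg hL1
  have e1 : 2 * Real.logb 3 L ≤ 1.262 * Real.logb 2 L := by
    simp only [Real.logb]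
    rw [show 2 * (Real.log L / Real.log 3) = (2*Real.log L)/Real.log 3 by ring,
        show (1.262:ℝ) * (Real.log L / Real.log 2) = (1.262*Real.log L)/Real.log 2 by ring,
        div_le_div_iff₀ hlog3 hlog2]
    nlinarith
  have e2 : 2 * Real.logb 3 2 ≤ 1.3 := by
    simp only [Real.logb]
    rw [show 2 * (Real.log 2 / Real.log 3) = (2*Real.log 2)/Real.log 3 by ring,
        div_le_iff₀ hlog3]
    nlinarith
  have hd : ((⌈Real.logb 3 ((⌈L⌉:ℤ):ℝ)⌉:ℤ):ℝ) ≤ Real.logb 3 ((⌈L⌉:ℤ):ℝ) + 1 :=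
    (Int.ceil_lt_add_one _).le
  linarith
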